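/- There exists an infinite family $\mathcal{F}$ of (not necessarily axis-parallel) closed rectangles in $\mathbb{R}^2$, each with positive area and diameter bounded by a uniform constant, such that any two members of $\mathcal{F}$ intersect, yet no finite set of points in $\mathbb{R}^2$ pierces all members of $\mathcal{F}$. -/

import Mathlib

/-- A (not necessarily axis-parallel) closed rectangle with nonempty interior in the
Euclidean plane: the image of a nondegenerate axis-parallel box under an isometry of
the plane. -/
def IsRectangle (F : Set (EuclideanSpace ℝ (Fin 2))) : Prop :=
  ∃ (g : EuclideanSpace ℝ (Fin 2) ≃ᵢ EuclideanSpace ℝ (Fin 2)) (a₁ b₁ a₂ b₂ : ℝ),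
    a₁ < b₁ ∧ a₂ < b₂ ∧
    F = g '' {x : EuclideanSpace ℝ (Fin 2) | x 0 ∈ Set.Icc a₁ b₁ ∧ x 1 ∈ Set.Icc a₂ b₂}

open Real Filter


noncomputable abbrev E2 := EuclideanSpace ℝ (Fin 2)

noncomputable def rot2 (θ : ℝ) : E2 ≃ᵢ E2 where
  toFun x := WithLp.toLp 2 ![x 0 * Real.cos θ - x 1 * Real.sin θ, x 0 * Real.sin θ + x 1 * Real.cos θ]
  invFun x := WithLp.toLp 2 ![x 0 * Real.cos θ + x 1 * Real.sin θ, -(x 0) * Real.sin θ + x 1 * Real.cos θ]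
  left_inv x := by
    have h := Real.sin_sq_add_cos_sq θ
    ext i
    fin_cases i <;> simp [Matrix.cons_val_zero, Matrix.cons_val_one] <;>
      first
        | linear_combination (x 0) * h
        | linear_combination (x 1) * h
  right_inv x := by
    have h := Real.sin_sq_add_cos_sq θ
    ext i
    fin_cases i <;> simp [Matrix.cons_val_zero, Matrix.cons_val_one] <;>
      first
        | linear_combination (x 0) * h
        | linear_combination (x 1) * h
  isometry_toFun := by
    have h := Real.sin_sq_add_cos_sq θ
    apply Isometry.of_dist_eq
    intro x y
    simp only [EuclideanSpace.dist_eq, Fin.sum_univ_two, Real.dist_eq, PiLp.toLp_apply,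
      Matrix.cons_val_zero, Matrix.cons_val_one, Matrix.head_cons, sq_abs]
    congr 1
    linear_combination ((x 0 - y 0) ^ 2 + (x 1 - y 1) ^ 2) * h

@[simp] lemma rot2_apply (θ : ℝ) (x : E2) :
    rot2 θ x = WithLp.toLp 2 ![x 0 * Real.cos θ - x 1 * Real.sin θ, x 0 * Real.sin θ + x 1 * Real.cos θ] :=
  rfl

@[simp] lemma rot2_symm_apply (θ : ℝ) (x : E2) :
    (rot2 θ).symm x =
      WithLp.toLp 2 ![x 0 * Real.cos θ + x 1 * Real.sin θ, -(x 0) * Real.sin θ + x 1 * Real.cos θ] :=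
  rfl

/-- the angles -/
noncomputable def ang (n : ℕ) : ℝ := (π / 4) / Real.sqrt (n + 1)

/-- the family of thin rectangles tangent to the unit circle -/
noncomputable def Fam (n : ℕ) : Set E2 :=
  {p | 1 ≤ p 0 * Real.cos (ang n) + p 1 * Real.sin (ang n) ∧
       p 0 * Real.cos (ang n) + p 1 * Real.sin (ang n) ≤ 1 + ((n : ℝ) + 1)⁻¹ ∧
       -1 ≤ -(p 0) * Real.sin (ang n) + p 1 * Real.cos (ang n) ∧
       -(p 0) * Real.sin (ang n) + p 1 * Real.cos (ang n) ≤ 1}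

lemma ang_pos (n : ℕ) : 0 < ang n :=
  div_pos (by positivity) (Real.sqrt_pos.2 (by positivity))

lemma sqrt_n1_ge_one (n : ℕ) : 1 ≤ Real.sqrt ((n : ℝ) + 1) :=
  Real.one_le_sqrt.2 (by push_cast; linarith [Nat.cast_nonneg (α := ℝ) n])

lemma ang_le (n : ℕ) : ang n ≤ π / 4 :=
  div_le_self (by positivity) (sqrt_n1_ge_one n)

lemma ang_lt_one (n : ℕ) : ang n < 1 :=
  lt_of_le_of_lt (ang_le n) (by linarith [Real.pi_lt_d2])

lemma ang_injective : Function.Injective ang := by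
  have : StrictAnti ang := by
    intro m n hmn
    exact div_lt_div_of_pos_left (by positivity) (Real.sqrt_pos.2 (by positivity))
      (Real.sqrt_lt_sqrt (by positivity) (by exact_mod_cast add_lt_add_left (Nat.cast_lt.2 hmn) (1:ℝ)))
  exact this.injective

/-- the tangent point of rectangle `n` -/
noncomputable def tp (n : ℕ) : E2 := WithLp.toLp 2 ![Real.cos (ang n), Real.sin (ang n)]

lemma tp_mem (n : ℕ) : tp n ∈ Fam n := by
  have h := Real.sin_sq_add_cos_sq (ang n)
  have hinv : (0:ℝ) < ((n : ℝ) + 1)⁻¹ := by positivity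
  simp only [Fam, tp, Set.mem_setOf_eq, PiLp.toLp_apply, Matrix.cons_val_zero, Matrix.cons_val_one,
    Matrix.head_cons]
  refine ⟨by linarith, by linarith, by linarith, by linarith⟩

lemma tp_not_mem {m n : ℕ} (hmn : m ≠ n) : tp n ∉ Fam m := by
  intro hmem
  have h1 : tp n 0 * Real.cos (ang m) + tp n 1 * Real.sin (ang m) = Real.cos (ang n - ang m) := by
    simp only [tp, PiLp.toLp_apply, Matrix.cons_val_zero, Matrix.cons_val_one, Matrix.head_cons, Real.cos_sub]
    try ring
  have h2 : Real.cos (ang n - ang m) < 1 := by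
    have hne : ang n - ang m ≠ 0 := sub_ne_zero.2 fun h => hmn (ang_injective h.symm)
    have habs : 0 < |ang n - ang m| := abs_pos.2 hne
    have habs2 : |ang n - ang m| ≤ π := by
      have h1 := ang_pos n; have h2 := ang_pos m
      have h3 := ang_le n; have h4 := ang_le m
      have := Real.pi_pos
      rw [abs_le]; constructor <;> nlinarith
    calc Real.cos (ang n - ang m) = Real.cos |ang n - ang m| := (Real.cos_abs _).symm
      _ < Real.cos 0 := Real.cos_lt_cos_of_nonneg_of_le_pi le_rfl habs2 habs
      _ = 1 := Real.cos_zero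
  have := hmem.1
  rw [h1] at this
  linarith

lemma fam_injective : Function.Injective Fam := by
  intro m n hF
  by_contra hmn
  exact tp_not_mem (Ne.symm hmn) (hF ▸ tp_mem m)

lemma isRect (n : ℕ) : IsRectangle (Fam n) := by
  have h := Real.sin_sq_add_cos_sq (ang n)
  have hinv : (0:ℝ) < ((n : ℝ) + 1)⁻¹ := by positivity
  refine ⟨rot2 (ang n), 1, 1 + ((n : ℝ) + 1)⁻¹, -1, 1, by linarith, by norm_num, ?_⟩
  ext p
  simp only [Set.mem_image, Set.mem_setOf_eq, Set.mem_Icc, Fam]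
  constructor
  · intro hp
    refine ⟨(rot2 (ang n)).symm p, ?_, (rot2 (ang n)).apply_symm_apply p⟩
    simp only [rot2_symm_apply, PiLp.toLp_apply, Matrix.cons_val_zero, Matrix.cons_val_one, Matrix.head_cons]
    exact ⟨⟨hp.1, hp.2.1⟩, hp.2.2.1, hp.2.2.2⟩
  · rintro ⟨x, ⟨⟨hx1, hx2⟩, hx3, hx4⟩, rfl⟩
    simp only [rot2_apply, PiLp.toLp_apply, Matrix.cons_val_zero, Matrix.cons_val_one, Matrix.head_cons]
    have e1 : (x 0 * Real.cos (ang n) - x 1 * Real.sin (ang n)) * Real.cos (ang n) +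
        (x 0 * Real.sin (ang n) + x 1 * Real.cos (ang n)) * Real.sin (ang n) = x 0 := by
      linear_combination (x 0) * h
    have e2 : -(x 0 * Real.cos (ang n) - x 1 * Real.sin (ang n)) * Real.sin (ang n) +
        (x 0 * Real.sin (ang n) + x 1 * Real.cos (ang n)) * Real.cos (ang n) = x 1 := by
      linear_combination (x 1) * h
    rw [e1, e2]
    exact ⟨hx1, hx2, hx3, hx4⟩

lemma diam_le (n : ℕ) : Metric.diam (Fam n) ≤ 6 := by
  have hsub : Fam n ⊆ Metric.closedBall (0 : E2) 3 := by
    intro p hp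
    obtain ⟨h1, h2, h3, h4⟩ := hp
    have h := Real.sin_sq_add_cos_sq (ang n)
    have hinv : ((n : ℝ) + 1)⁻¹ ≤ 1 := by
      rw [inv_le_one_iff₀]; right; push_cast; linarith [Nat.cast_nonneg (α := ℝ) n]
    have key : p 0 ^ 2 + p 1 ^ 2 ≤ 9 := by
      have key2 : p 0 ^ 2 + p 1 ^ 2 =
          (p 0 * Real.cos (ang n) + p 1 * Real.sin (ang n)) ^ 2 +
          (-(p 0) * Real.sin (ang n) + p 1 * Real.cos (ang n)) ^ 2 := by
        linear_combination (-(p 0 ^ 2) - p 1 ^ 2) * h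
      nlinarith
    rw [Metric.mem_closedBall, EuclideanSpace.dist_eq]
    simp only [Fin.sum_univ_two, Real.dist_eq]
    have hz : (0 : E2) 0 = 0 := rfl
    have hz1 : (0 : E2) 1 = 0 := rfl
    rw [hz, hz1, sub_zero, sub_zero, sq_abs, sq_abs]
    calc Real.sqrt (p 0 ^ 2 + p 1 ^ 2) ≤ Real.sqrt 9 := Real.sqrt_le_sqrt key
      _ = 3 := by rw [show (9:ℝ) = 3 ^ 2 by norm_num, Real.sqrt_sq (by norm_num : (0:ℝ) ≤ 3)]
  calc Metric.diam (Fam n) ≤ Metric.diam (Metric.closedBall (0 : E2) 3) :=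
        Metric.diam_mono hsub Metric.isBounded_closedBall
    _ ≤ 2 * 3 := Metric.diam_closedBall (by norm_num)
    _ = 6 := by norm_num

/-- the intersection witness for rectangles m and n -/
noncomputable def ipt (m n : ℕ) : E2 :=
  WithLp.toLp 2 ![(Real.cos (ang m) + Real.cos (ang n)) /
      (1 + (Real.cos (ang m) * Real.cos (ang n) + Real.sin (ang m) * Real.sin (ang n))),
    (Real.sin (ang m) + Real.sin (ang n)) /
      (1 + (Real.cos (ang m) * Real.cos (ang n) + Real.sin (ang m) * Real.sin (ang n)))]

lemma ipt_comm (m n : ℕ) : ipt m n = ipt n m := by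
  ext i
  fin_cases i <;> simp only [ipt, PiLp.toLp_apply, Matrix.cons_val_zero, Matrix.cons_val_one, Matrix.head_cons] <;>
    ring_nf

lemma d_ge_one (m n : ℕ) :
    1 ≤ 1 + (Real.cos (ang m) * Real.cos (ang n) + Real.sin (ang m) * Real.sin (ang n)) := by
  have : Real.cos (ang m) * Real.cos (ang n) + Real.sin (ang m) * Real.sin (ang n) =
      Real.cos (ang m - ang n) := (Real.cos_sub _ _).symm
  rw [this]
  have hc : 0 ≤ Real.cos (ang m - ang n) := by
    apply Real.cos_nonneg_of_mem_Icc
    have h1 := ang_le m; have h2 := ang_pos n; have h3 := ang_le n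
    have h4 := ang_pos m; have h5 := Real.pi_pos
    constructor <;> [nlinarith; nlinarith]
  linarith

lemma ipt_mem (m n : ℕ) : ipt m n ∈ Fam m := by
  set cm := Real.cos (ang m); set sm := Real.sin (ang m)
  set cn := Real.cos (ang n); set sn := Real.sin (ang n)
  have hm := Real.sin_sq_add_cos_sq (ang m)
  have hd := d_ge_one m n
  set d := 1 + (cm * cn + sm * sn) with hd_def
  have hd0 : 0 < d := by linarith
  have hinv : (0:ℝ) < ((m : ℝ) + 1)⁻¹ := by positivity
  have hA : ipt m n 0 * cm + ipt m n 1 * sm = 1 := by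
    simp only [ipt, PiLp.toLp_apply, Matrix.cons_val_zero, Matrix.cons_val_one, Matrix.head_cons]
    rw [div_mul_eq_mul_div, div_mul_eq_mul_div, ← add_div, div_eq_one_iff_eq hd0.ne']
    linear_combination hm
  have hsin : -(ipt m n 0) * sm + ipt m n 1 * cm = Real.sin (ang n - ang m) / d := by
    simp only [ipt, PiLp.toLp_apply, Matrix.cons_val_zero, Matrix.cons_val_one, Matrix.head_cons, Real.sin_sub]
    have hd0' := hd0.ne'
    simp only [hd_def, cm, sm, cn, sn] at hd0' ⊢
    field_simp
    ring
  have hB1 : -1 ≤ -(ipt m n 0) * sm + ipt m n 1 * cm := by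
    rw [hsin, le_div_iff₀ hd0]
    have := Real.neg_one_le_sin (ang n - ang m)
    nlinarith
  have hB2 : -(ipt m n 0) * sm + ipt m n 1 * cm ≤ 1 := by
    rw [hsin, div_le_one hd0]
    have := Real.sin_le_one (ang n - ang m)
    linarith
  exact ⟨le_of_eq hA.symm, by rw [hA]; linarith, hB1, hB2⟩

lemma fam_inter (m n : ℕ) : (Fam m ∩ Fam n).Nonempty :=
  ⟨ipt m n, ipt_mem m n, by rw [ipt_comm]; exact ipt_mem n m⟩

lemma tendsto_sqrt_atTop : Tendsto Real.sqrt atTop atTop :=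
  tendsto_atTop_atTop.2 fun b => ⟨b ^ 2, fun a ha => by
    calc b ≤ |b| := le_abs_self b
      _ = Real.sqrt (b ^ 2) := (Real.sqrt_sq_eq_abs b).symm
      _ ≤ Real.sqrt a := Real.sqrt_le_sqrt ha⟩

lemma tendsto_sqrt_n1 : Tendsto (fun n : ℕ => Real.sqrt ((n : ℝ) + 1)) atTop atTop :=
  _root_.tendsto_sqrt_atTop.comp (tendsto_atTop_add_const_right _ 1 tendsto_natCast_atTop_atTop)

lemma tendsto_ang : Tendsto ang atTop (nhds 0) := by
  have h := tendsto_sqrt_n1.inv_tendsto_atTop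
  have := h.const_mul (π / 4)
  simp only [mul_zero] at this
  convert this using 2 with n
  try simp [ang, div_eq_mul_inv]

lemma eventually_not_mem (p : E2) : ∀ᶠ n : ℕ in atTop, p ∉ Fam n := by
  have hcos : Tendsto (fun n => Real.cos (ang n)) atTop (nhds 1) := by
    simpa [Function.comp_def] using (Real.continuous_cos.tendsto 0).comp tendsto_ang
  have hsin : Tendsto (fun n => Real.sin (ang n)) atTop (nhds 0) := by
    simpa [Function.comp_def] using (Real.continuous_sin.tendsto 0).comp tendsto_ang
  have hA : Tendsto (fun n => p 0 * Real.cos (ang n) + p 1 * Real.sin (ang n))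
      atTop (nhds (p 0)) := by
    have := (hcos.const_mul (p 0)).add (hsin.const_mul (p 1))
    simpa using this
  rcases lt_trichotomy (p 0) 1 with h | h | h
  · filter_upwards [hA.eventually_lt_const h] with n hn hmem
    have := hmem.1
    linarith
  · rcases le_or_gt (p 1) 0 with hb | hb
    · refine Filter.Eventually.of_forall fun n hmem => ?_
      have hs : 0 ≤ Real.sin (ang n) :=
        Real.sin_nonneg_of_nonneg_of_le_pi (ang_pos n).le
          (by have := ang_le n; have := Real.pi_pos; linarith)
      have hc : Real.cos (ang n) < 1 := by
        have := Real.cos_lt_cos_of_nonneg_of_le_pi (le_refl 0)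
          (by have := ang_le n; have := Real.pi_pos; linarith) (ang_pos n)
        rwa [Real.cos_zero] at this
      have h1 := hmem.1
      nlinarith [mul_nonneg (neg_nonneg.2 hb) hs]
    · -- p 0 = 1, p 1 > 0 : the expression grows like √n above 1 + 1/(n+1)
      have hgrow : Tendsto
          (fun n : ℕ => (p 0 * Real.cos (ang n) + p 1 * Real.sin (ang n) - 1) * ((n : ℝ) + 1))
          atTop atTop := by
        apply tendsto_atTop_mono
          (f := fun n : ℕ => p 1 * (π / 4) / 2 * Real.sqrt ((n : ℝ) + 1) + -((π / 4) ^ 2 / 2))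
        · intro n
          have hangdef : ang n * Real.sqrt ((n : ℝ) + 1) = π / 4 := by
            rw [ang]; field_simp
          set s := Real.sqrt ((n : ℝ) + 1) with hs_def
          have hsq : s ^ 2 = (n : ℝ) + 1 := Real.sq_sqrt (by positivity)
          have hspos : 0 < s := Real.sqrt_pos.2 (by positivity)
          have hsin_lb : ang n / 2 ≤ Real.sin (ang n) := by
            have h1 := Real.sin_gt_sub_cube (ang_pos n)
            nlinarith [ang_pos n, ang_lt_one n,
              mul_nonneg (by linarith [ang_lt_one n] : (0:ℝ) ≤ 1 - ang n) (sq_nonneg (ang n)),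
              mul_nonneg (by linarith [ang_lt_one n] : (0:ℝ) ≤ 1 - ang n) (ang_pos n).le]
          have hcos_lb : 1 - (ang n) ^ 2 / 2 ≤ Real.cos (ang n) :=
            Real.one_sub_sq_div_two_le_cos
          have e1 : (ang n) ^ 2 * s ^ 2 = (π / 4) ^ 2 := by rw [← mul_pow, hangdef]
          have e2 : ang n * s ^ 2 = (π / 4) * s := by
            rw [pow_two, ← mul_assoc, hangdef]
          have t1 : ((1 - (ang n) ^ 2 / 2) - 1) * s ^ 2 ≤ (Real.cos (ang n) - 1) * s ^ 2 :=
            mul_le_mul_of_nonneg_right (by linarith) (sq_nonneg s)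
          have t2 : (ang n / 2) * s ^ 2 ≤ Real.sin (ang n) * s ^ 2 :=
            mul_le_mul_of_nonneg_right hsin_lb (sq_nonneg s)
          have t3 : p 1 * ((ang n / 2) * s ^ 2) ≤ p 1 * (Real.sin (ang n) * s ^ 2) :=
            mul_le_mul_of_nonneg_left t2 hb.le
          rw [← hsq, h]
          nlinarith [t1, t3, e1, e2]
        · apply tendsto_atTop_add_const_right
          exact Tendsto.const_mul_atTop (by positivity) tendsto_sqrt_n1
      filter_upwards [hgrow.eventually_gt_atTop 1] with n hn hmem
      have hpos : (0 : ℝ) < (n : ℝ) + 1 := by positivity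
      have h2 := hmem.2.1
      have h3 : ((n : ℝ) + 1)⁻¹ < p 0 * Real.cos (ang n) + p 1 * Real.sin (ang n) - 1 := by
        rw [inv_eq_one_div, div_lt_iff₀ hpos]
        linarith
      linarith
  · have hb1 : Tendsto (fun n : ℕ => (n : ℝ) + 1) atTop atTop :=
      tendsto_atTop_add_const_right _ 1 tendsto_natCast_atTop_atTop
    have hinv0 : Tendsto (fun n : ℕ => ((n : ℝ) + 1)⁻¹) atTop (nhds 0) :=
      hb1.inv_tendsto_atTop
    have hA' : Tendsto
        (fun n : ℕ => p 0 * Real.cos (ang n) + p 1 * Real.sin (ang n) - ((n : ℝ) + 1)⁻¹)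
        atTop (nhds (p 0)) := by
      have := hA.sub hinv0
      simpa using this
    filter_upwards [hA'.eventually_const_lt h] with n hn hmem
    have := hmem.2.1
    linarith

theorem stmt10 :
    ∃ 𝓕 : Set (Set (EuclideanSpace ℝ (Fin 2))),
      𝓕.Infinite ∧
      (∀ F ∈ 𝓕, IsRectangle F) ∧
      (∃ D : ℝ, ∀ F ∈ 𝓕, Metric.diam F ≤ D) ∧
      (∀ F ∈ 𝓕, ∀ G ∈ 𝓕, (F ∩ G).Nonempty) ∧
      ¬ ∃ P : Set (EuclideanSpace ℝ (Fin 2)), P.Finite ∧ ∀ F ∈ 𝓕, ∃ p ∈ P, p ∈ F := by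
  refine ⟨Set.range Fam, Set.infinite_range_of_injective fam_injective, ?_, ⟨6, ?_⟩, ?_, ?_⟩
  · rintro F ⟨n, rfl⟩; exact isRect n
  · rintro F ⟨n, rfl⟩; exact diam_le n
  · rintro F ⟨m, rfl⟩ G ⟨n, rfl⟩; exact fam_inter m n
  · rintro ⟨P, hPfin, hP⟩
    have hev : ∀ᶠ n : ℕ in atTop, ∀ p ∈ P, p ∉ Fam n :=
      (Filter.eventually_all_finite hPfin).2 fun p _ => eventually_not_mem p
    obtain ⟨n, hn⟩ := hev.exists
    obtain ⟨p, hpP, hpF⟩ := hP (Fam n) ⟨n, rfl⟩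
    exact hn p hpP hpF
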